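/- (Spatial L¹ modulus of continuity of the heat kernels.) Let p denote either the periodic heat kernel p^{per} or the Neumann heat kernel p^{Neu} on [0,1]. There exists a constant C > 0 such that for every t ∈ (0,1] and every x, y ∈ [0,1]: ∫_0^1 | p_t(x,z) − p_t(y,z) | dz ≤ C |x − y| t^{−1/2}. -/

import Mathlib

open MeasureTheory

/-- The one-dimensional Gaussian heat kernel `Γ(t,x) = (2πt)^{-1/2} exp(-x²/(2t))`. -/
noncomputable def heatGamma (t x : ℝ) : ℝ :=
  (2 * Real.pi * t) ^ (-(1:ℝ)/2) * Real.exp (-x ^ 2 / (2 * t))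

/-- The periodic heat kernel on `[0,1]`. -/
noncomputable def pPer (t x y : ℝ) : ℝ := ∑' n : ℤ, heatGamma t (x - y + n)

/-- The Neumann heat kernel on `[0,1]`. -/
noncomputable def pNeu (t x y : ℝ) : ℝ :=
  ∑' n : ℤ, (heatGamma t (x - y + 2 * n) + heatGamma t (x + y + 2 * n))

section HeatKernelAux

open Real Set

lemma heatGamma_pos {t : ℝ} (ht : 0 < t) (x : ℝ) : 0 < heatGamma t x := by
  unfold heatGamma; positivity

lemma heatGamma_le {t : ℝ} (ht : 0 < t) (x : ℝ) :
    heatGamma t x ≤ (2 * Real.pi * t) ^ (-(1:ℝ)/2) := by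
  unfold heatGamma
  have h1 : Real.exp (-x ^ 2 / (2 * t)) ≤ 1 :=
    Real.exp_le_one_iff.2 (div_nonpos_of_nonpos_of_nonneg (by nlinarith [sq_nonneg x]) (by positivity))
  have h2 : (0:ℝ) ≤ (2 * Real.pi * t) ^ (-(1:ℝ)/2) := by positivity
  nlinarith [Real.exp_pos (-x ^ 2 / (2 * t))]

lemma heatGamma_anti {t : ℝ} (ht : 0 < t) {v w : ℝ} (h : v^2 ≤ w^2) :
    heatGamma t w ≤ heatGamma t v := by
  unfold heatGamma
  have h2 : (0:ℝ) ≤ (2 * Real.pi * t) ^ (-(1:ℝ)/2) := by positivity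
  have : Real.exp (-w ^ 2 / (2 * t)) ≤ Real.exp (-v ^ 2 / (2 * t)) := by
    apply Real.exp_le_exp.2
    apply div_le_div_of_nonneg_right (by linarith) (by linarith) |>.trans_eq rfl
  exact mul_le_mul_of_nonneg_left this h2

lemma summable_of_int_decay {f : ℤ → ℝ} {C r : ℝ} (hr0 : 0 ≤ r) (hr1 : r < 1)
    (hf : ∀ n : ℤ, |f n| ≤ C * ((n.natAbs : ℝ) + 1) * r ^ n.natAbs) : Summable f := by
  have hgeom : Summable (fun m : ℕ => C * ((m : ℝ) + 1) * r ^ m) := by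
    have h1 : Summable (fun m : ℕ => (m : ℝ) * r ^ m) := by
      simpa using summable_pow_mul_geometric_of_norm_lt_one 1 (r := r)
        (by rwa [Real.norm_eq_abs, abs_of_nonneg hr0])
    have h2 : Summable (fun m : ℕ => r ^ m) := summable_geometric_of_lt_one hr0 hr1
    exact ((h1.add h2).mul_left C).congr (fun m => by ring)
  have hmaj : Summable (fun n : ℤ => C * ((n.natAbs : ℝ) + 1) * r ^ n.natAbs) := by
    refine Summable.of_nat_of_neg (hgeom.congr fun m => by simp) (hgeom.congr fun m => by simp)
  exact (Summable.of_nonneg_of_le (fun n => abs_nonneg _) hf hmaj).of_abs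

lemma sq_ge_abs_aux {w m c : ℝ} (h : m - c ≤ |w|) : m - (c + 1) ≤ w ^ 2 := by
  nlinarith [sq_abs w, abs_nonneg w, sq_nonneg (|w| - 1)]

lemma summable_heatGamma {t : ℝ} (ht : 0 < t) (b a : ℝ) (ha : 1 ≤ a) :
    Summable fun n : ℤ => heatGamma t (b + a * n) := by
  set α := (2 * Real.pi * t) ^ (-(1:ℝ)/2) with hα
  have hα0 : 0 < α := by rw [hα]; positivity
  have hr1 : Real.exp (-1/(2*t)) < 1 := Real.exp_lt_one_iff.2 (by
    apply div_neg_of_neg_of_pos <;> norm_num; positivity)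
  refine summable_of_int_decay (C := α * Real.exp ((|b|+1)/(2*t)))
    (r := Real.exp (-1/(2*t))) (Real.exp_nonneg _) hr1 ?_
  intro n
  have key : ((n.natAbs : ℝ)) - (|b| + 1) ≤ (b + a * n) ^ 2 := by
    apply sq_ge_abs_aux
    have h1 : |(n:ℝ)| - |b| ≤ |b + a * n| := by
      have h2 : |a * (n:ℝ)| - |(-b)| ≤ |a * n - (-b)| := abs_sub_abs_le_abs_sub _ _
      have h3 : |a * (n:ℝ)| = a * |(n:ℝ)| := by
        rw [abs_mul, abs_of_nonneg (by linarith)]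
      have h4 : |(n:ℝ)| ≤ a * |(n:ℝ)| := le_mul_of_one_le_left (abs_nonneg _) ha
      have h5 : a * (n:ℝ) - (-b) = b + a * n := by ring
      rw [h5, h3, abs_neg] at h2
      linarith
    rwa [Nat.cast_natAbs, Int.cast_abs]
  have hpos : (0:ℝ) < 2 * t := by linarith
  have hexp : Real.exp (-(b + a * ↑n) ^ 2 / (2 * t))
      ≤ Real.exp ((|b|+1)/(2*t)) * Real.exp (-1/(2*t)) ^ n.natAbs := by
    rw [← Real.exp_nat_mul, ← Real.exp_add]
    apply Real.exp_le_exp.2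
    have e1 : (|b|+1)/(2*t) + (n.natAbs:ℝ)*(-1/(2*t)) = ((|b|+1) - n.natAbs)/(2*t) := by ring
    rw [e1, div_le_div_iff_of_pos_right hpos]
    linarith
  calc |heatGamma t (b + a * n)| = α * Real.exp (-(b + a * ↑n) ^ 2 / (2 * t)) := by
        rw [abs_of_pos (heatGamma_pos ht _)]; rfl
    _ ≤ α * (Real.exp ((|b|+1)/(2*t)) * Real.exp (-1/(2*t)) ^ n.natAbs) :=
        mul_le_mul_of_nonneg_left hexp hα0.le
    _ ≤ α * Real.exp ((|b|+1)/(2*t)) * ((n.natAbs:ℝ) + 1) * Real.exp (-1/(2*t)) ^ n.natAbs := by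
        have key2 : 0 ≤ α * Real.exp ((|b|+1)/(2*t)) * Real.exp (-1/(2*t)) ^ n.natAbs
            * (n.natAbs:ℝ) := by positivity
        nlinarith [key2]

lemma alpha_le_rpow {t : ℝ} (ht : 0 < t) :
    (2 * Real.pi * t) ^ (-(1:ℝ)/2) ≤ t ^ (-(1:ℝ)/2) := by
  apply Real.rpow_le_rpow_of_nonpos ht (by nlinarith [Real.pi_gt_three]) (by norm_num)

lemma hasDerivAt_heatGamma {t : ℝ} (ht : 0 < t) (x : ℝ) :
    HasDerivAt (heatGamma t) (-(x / t) * heatGamma t x) x := by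
  have h1 : HasDerivAt (fun x : ℝ => -x ^ 2 / (2 * t)) (-(2 * x) / (2 * t)) x := by
    simpa using ((hasDerivAt_pow 2 x).neg.div_const (2 * t))
  have h2 : HasDerivAt (fun y : ℝ => (2 * Real.pi * t) ^ (-(1:ℝ)/2) * Real.exp (-y ^ 2 / (2 * t)))
      ((2 * Real.pi * t) ^ (-(1:ℝ)/2) * (Real.exp (-x ^ 2 / (2 * t)) * (-(2 * x) / (2 * t)))) x :=
    (h1.exp).const_mul ((2 * Real.pi * t) ^ (-(1:ℝ)/2))
  refine HasDerivAt.congr_deriv h2 ?_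
  unfold heatGamma
  field_simp

lemma one_div_exp_le {t : ℝ} (ht : 0 < t) : Real.exp (-1/(4*t)) ≤ 4 * t := by
  have h := Real.add_one_le_exp (1/(4*t))
  have h2 : Real.exp (1/(4*t)) * (Real.exp (1/(4*t)))⁻¹ = 1 :=
    mul_inv_cancel₀ (ne_of_gt (Real.exp_pos _))
  have h3 : (1/(4*t)) * (4*t) = 1 := by field_simp
  have h4 : (0:ℝ) ≤ (Real.exp (1/(4*t)))⁻¹ := inv_nonneg.2 (Real.exp_pos _).le
  rw [show -1/(4*t) = -(1/(4*t)) by ring, Real.exp_neg]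
  have h5 : (1/(4*t)) * (Real.exp (1/(4*t)))⁻¹ ≤ 1 := by
    nlinarith [mul_le_mul_of_nonneg_right h h4, h2, h4]
  have h6 := mul_le_mul_of_nonneg_right h5 (by positivity : (0:ℝ) ≤ 4*t)
  have h7 : (1/(4*t)) * (4*t) * (Real.exp (1/(4*t)))⁻¹ = (Real.exp (1/(4*t)))⁻¹ := by
    rw [h3, one_mul]
  nlinarith [h6, h7]

lemma exp_factor_le {t m : ℝ} (ht : 0 < t) (ht1 : t ≤ 1) (hm : 1 ≤ m) :
    Real.exp (-m^2/(2*t)) * (1/t) ≤ 4 * Real.exp (-m^2/4) := by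
  have e1 : Real.exp (-m^2/(2*t)) = Real.exp (-m^2/(4*t)) * Real.exp (-m^2/(4*t)) := by
    rw [← Real.exp_add]; congr 1; ring
  have e2 : Real.exp (-m^2/(4*t)) ≤ Real.exp (-m^2/4) := by
    apply Real.exp_le_exp.2
    rw [div_le_div_iff₀ (by positivity) (by norm_num)]
    nlinarith [sq_nonneg m]
  have e3 : Real.exp (-m^2/(4*t)) ≤ Real.exp (-1/(4*t)) := by
    apply Real.exp_le_exp.2
    rw [div_le_div_iff_of_pos_right (by positivity : (0:ℝ) < 4*t)]
    nlinarith
  have e4 := one_div_exp_le ht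
  have h5 : (0:ℝ) ≤ Real.exp (-m^2/4) := (Real.exp_pos _).le
  have h6 : (0:ℝ) ≤ Real.exp (-m^2/(4*t)) := (Real.exp_pos _).le
  have h7 : (0:ℝ) ≤ Real.exp (-1/(4*t)) := (Real.exp_pos _).le
  rw [e1]
  calc Real.exp (-m^2/(4*t)) * Real.exp (-m^2/(4*t)) * (1/t)
      ≤ Real.exp (-m^2/4) * Real.exp (-1/(4*t)) * (1/t) := by
        apply mul_le_mul_of_nonneg_right (mul_le_mul e2 e3 h6 h5) (by positivity)
    _ ≤ Real.exp (-m^2/4) * (4*t) * (1/t) := by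
        apply mul_le_mul_of_nonneg_right (mul_le_mul_of_nonneg_left e4 h5) (by positivity)
    _ = 4 * Real.exp (-m^2/4) * (t * (1/t)) := by ring
    _ = 4 * Real.exp (-m^2/4) := by rw [mul_one_div_cancel (ne_of_gt ht), mul_one]

lemma tail_bound {t : ℝ} (ht : 0 < t) (ht1 : t ≤ 1) {m M u v : ℝ} (hm : 1 ≤ m)
    (hs : ∀ s ∈ Set.uIcc u v, m ≤ |s| ∧ |s| ≤ M) :
    |heatGamma t u - heatGamma t v|
      ≤ |u - v| * (t ^ (-(1:ℝ)/2) * (4 * M * Real.exp (-m^2/4))) := by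
  have hM0 : (0:ℝ) ≤ M := le_trans (le_trans (by linarith) (hs u Set.left_mem_uIcc).1)
    (hs u Set.left_mem_uIcc).2
  have bound : ∀ s ∈ Set.uIcc u v,
      ‖-(s / t) * heatGamma t s‖ ≤ t ^ (-(1:ℝ)/2) * (4 * M * Real.exp (-m^2/4)) := by
    intro s hsm
    obtain ⟨h1s, h2s⟩ := hs s hsm
    have hΓ : heatGamma t s ≤ t ^ (-(1:ℝ)/2) * Real.exp (-m^2/(2*t)) := by
      unfold heatGamma
      apply mul_le_mul (alpha_le_rpow ht) (Real.exp_le_exp.2 ?_) (Real.exp_nonneg _)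
        (Real.rpow_pos_of_pos ht _).le
      rw [div_le_div_iff_of_pos_right (by linarith : (0:ℝ) < 2*t)]
      nlinarith [sq_abs s]
    have hnorm : ‖-(s / t) * heatGamma t s‖ = |s| / t * heatGamma t s := by
      rw [Real.norm_eq_abs, abs_mul, abs_neg, abs_div, abs_of_pos ht,
        abs_of_pos (heatGamma_pos ht s)]
    rw [hnorm]
    calc |s| / t * heatGamma t s
        ≤ M / t * (t ^ (-(1:ℝ)/2) * Real.exp (-m^2/(2*t))) := by
          apply mul_le_mul (by gcongr) hΓ (heatGamma_pos ht s).le (by positivity)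
      _ = t ^ (-(1:ℝ)/2) * M * (Real.exp (-m^2/(2*t)) * (1/t)) := by ring
      _ ≤ t ^ (-(1:ℝ)/2) * M * (4 * Real.exp (-m^2/4)) := by
          apply mul_le_mul_of_nonneg_left (exp_factor_le ht ht1 hm) (by positivity)
      _ = t ^ (-(1:ℝ)/2) * (4 * M * Real.exp (-m^2/4)) := by ring
  have mvt := (convex_uIcc u v).norm_image_sub_le_of_norm_hasDerivWithin_le
    (fun s _ => (hasDerivAt_heatGamma ht s).hasDerivWithinAt) bound
    Set.right_mem_uIcc Set.left_mem_uIcc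
  rw [Real.norm_eq_abs, Real.norm_eq_abs] at mvt
  calc |heatGamma t u - heatGamma t v| ≤ (t ^ (-(1:ℝ)/2) * (4 * M * Real.exp (-m^2/4))) * |u - v| := mvt
    _ = |u - v| * (t ^ (-(1:ℝ)/2) * (4 * M * Real.exp (-m^2/4))) := by ring

lemma integrable_heatGamma {t : ℝ} (ht : 0 < t) : Integrable (heatGamma t) := by
  have he : (fun u : ℝ => (2*Real.pi*t) ^ (-(1:ℝ)/2) * Real.exp (-(2*t)⁻¹ * u^2))
      = heatGamma t := by
    funext u; unfold heatGamma; rw [show -u^2/(2*t) = -(2*t)⁻¹ * u^2 by ring]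
  exact he ▸ ((integrable_exp_neg_mul_sq (show 0 < (2*t)⁻¹ by positivity)).const_mul _)

lemma integrable_heatGamma_shift {t : ℝ} (ht : 0 < t) (a : ℝ) :
    Integrable (fun u => heatGamma t (a + u)) := by
  exact ((measurePreserving_add_left volume a).integrable_comp_emb
    (MeasurableEquiv.measurableEmbedding (MeasurableEquiv.addLeft a))).2
    (integrable_heatGamma ht)

lemma shift_Iic {t : ℝ} (ht : 0 < t) (a c : ℝ) :
    ∫ u in Set.Iic c, heatGamma t (a + u) = ∫ u in Set.Iic (a + c), heatGamma t u := by
  have := (measurePreserving_add_left volume a).setIntegral_preimage_emb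
    (MeasurableEquiv.measurableEmbedding (MeasurableEquiv.addLeft a))
    (heatGamma t) (Set.Iic (a + c))
  simpa [Set.preimage_const_add_Iic, show a + c - a = c by ring] using this

lemma shift_Ioi {t : ℝ} (ht : 0 < t) (a c : ℝ) :
    ∫ u in Set.Ioi c, heatGamma t (a + u) = ∫ u in Set.Ioi (a + c), heatGamma t u := by
  have := (measurePreserving_add_left volume a).setIntegral_preimage_emb
    (MeasurableEquiv.measurableEmbedding (MeasurableEquiv.addLeft a))
    (heatGamma t) (Set.Ioi (a + c))
  simpa [Set.preimage_const_add_Ioi, show a + c - a = c by ring] using this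

lemma rpow_half_bound {t : ℝ} (ht : 0 < t) :
    2 * (2 * Real.pi * t) ^ (-(1:ℝ)/2) ≤ t ^ (-(1:ℝ)/2) := by
  have h4 : ((4:ℝ)) ^ (-(1:ℝ)/2) = 1/2 := by
    rw [show (-(1:ℝ)/2) = -(1/2 : ℝ) by norm_num,
      Real.rpow_neg (by norm_num : (0:ℝ) ≤ 4),
      show ((4:ℝ)) = 2^(2:ℕ) by norm_num, ← Real.rpow_natCast 2 2,
      ← Real.rpow_mul (by norm_num : (0:ℝ) ≤ 2)]
    norm_num
  have h1 : (2 * Real.pi * t) ^ (-(1:ℝ)/2) ≤ (4 * t) ^ (-(1:ℝ)/2) :=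
    Real.rpow_le_rpow_of_nonpos (by positivity)
      (by nlinarith [Real.pi_gt_three]) (by norm_num)
  have h2 : ((4:ℝ) * t) ^ (-(1:ℝ)/2) = (4:ℝ) ^ (-(1:ℝ)/2) * t ^ (-(1:ℝ)/2) :=
    Real.mul_rpow (by norm_num) ht.le
  rw [h2, h4] at h1
  linarith

lemma lemA' {t : ℝ} (ht : 0 < t) {x y : ℝ} (hxy : y ≤ x) :
    ∫ u, |heatGamma t (x + u) - heatGamma t (y + u)| ≤ (x - y) * t ^ (-(1:ℝ)/2) := by
  set c : ℝ := -(x+y)/2 with hc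
  set α : ℝ := (2 * Real.pi * t) ^ (-(1:ℝ)/2) with hα
  have hint : ∀ a : ℝ, Integrable (fun u => heatGamma t (a + u)) :=
    fun a => integrable_heatGamma_shift ht a
  have habs : Integrable (fun u => |heatGamma t (x + u) - heatGamma t (y + u)|) :=
    ((hint x).sub (hint y)).abs
  -- sign facts
  have sign1 : ∀ u ∈ Set.Iic c, heatGamma t (y + u) ≤ heatGamma t (x + u) := by
    intro u hu
    simp only [Set.mem_Iic] at hu
    exact heatGamma_anti ht (by nlinarith)
  have sign2 : ∀ u ∈ Set.Ioi c, heatGamma t (x + u) ≤ heatGamma t (y + u) := by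
    intro u hu
    simp only [Set.mem_Ioi] at hu
    exact heatGamma_anti ht (by nlinarith)
  -- the middle piece
  have hmid : ∀ d : ℝ, (∫ u in Set.Ioc (y + c) (x + c), heatGamma t u) ≤ α * (x - y) := by
    intro _
    have hb := norm_setIntegral_le_of_norm_le_const (μ := volume)
      (s := Set.Ioc (y + c) (x + c)) (C := α) (f := heatGamma t)
      (by rw [Real.volume_Ioc]; exact ENNReal.ofReal_lt_top)
      (fun u _ => by rw [Real.norm_eq_abs, abs_of_pos (heatGamma_pos ht u)];
                     exact heatGamma_le ht u)
    rw [measureReal_def, Real.volume_Ioc, ENNReal.toReal_ofReal (by linarith : (0:ℝ) ≤ x + c - (y + c))] at hb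
    calc (∫ u in Set.Ioc (y + c) (x + c), heatGamma t u)
        ≤ ‖∫ u in Set.Ioc (y + c) (x + c), heatGamma t u‖ := le_abs_self _
      _ ≤ α * (x + c - (y + c)) := hb
      _ = α * (x - y) := by ring
  -- Iic piece
  have hIic : (∫ u in Set.Iic c, |heatGamma t (x + u) - heatGamma t (y + u)|)
      ≤ α * (x - y) := by
    have e1 : (∫ u in Set.Iic c, |heatGamma t (x + u) - heatGamma t (y + u)|)
        = ∫ u in Set.Iic c, (heatGamma t (x + u) - heatGamma t (y + u)) := by
      apply setIntegral_congr_fun measurableSet_Iic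
      intro u hu
      exact abs_of_nonneg (sub_nonneg.2 (sign1 u hu))
    have e2 : (∫ u in Set.Iic c, (heatGamma t (x + u) - heatGamma t (y + u)))
        = (∫ u in Set.Iic c, heatGamma t (x + u)) - ∫ u in Set.Iic c, heatGamma t (y + u) :=
      integral_sub ((hint x).integrableOn) ((hint y).integrableOn)
    have e3 : (∫ u in Set.Iic (y + c), heatGamma t u)
          + (∫ u in Set.Ioc (y + c) (x + c), heatGamma t u)
        = ∫ u in Set.Iic (x + c), heatGamma t u := by
      rw [← setIntegral_union (Set.Iic_disjoint_Ioc le_rfl) measurableSet_Ioc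
        ((integrable_heatGamma ht).integrableOn) ((integrable_heatGamma ht).integrableOn),
        Set.Iic_union_Ioc_eq_Iic (by linarith)]
    rw [e1, e2, shift_Iic ht x c, shift_Iic ht y c]
    have := hmid 0
    linarith
  -- Ioi piece
  have hIoi : (∫ u in Set.Ioi c, |heatGamma t (x + u) - heatGamma t (y + u)|)
      ≤ α * (x - y) := by
    have e1 : (∫ u in Set.Ioi c, |heatGamma t (x + u) - heatGamma t (y + u)|)
        = ∫ u in Set.Ioi c, (heatGamma t (y + u) - heatGamma t (x + u)) := by
      apply setIntegral_congr_fun measurableSet_Ioi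
      intro u hu
      show |heatGamma t (x + u) - heatGamma t (y + u)|
        = heatGamma t (y + u) - heatGamma t (x + u)
      rw [abs_sub_comm]
      exact abs_of_nonneg (sub_nonneg.2 (sign2 u hu))
    have e2 : (∫ u in Set.Ioi c, (heatGamma t (y + u) - heatGamma t (x + u)))
        = (∫ u in Set.Ioi c, heatGamma t (y + u)) - ∫ u in Set.Ioi c, heatGamma t (x + u) :=
      integral_sub ((hint y).integrableOn) ((hint x).integrableOn)
    have e3 : (∫ u in Set.Ioc (y + c) (x + c), heatGamma t u)
          + (∫ u in Set.Ioi (x + c), heatGamma t u)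
        = ∫ u in Set.Ioi (y + c), heatGamma t u := by
      rw [← setIntegral_union (Set.Ioc_disjoint_Ioi le_rfl) measurableSet_Ioi
        ((integrable_heatGamma ht).integrableOn) ((integrable_heatGamma ht).integrableOn),
        Set.Ioc_union_Ioi_eq_Ioi (by linarith)]
    rw [e1, e2, shift_Ioi ht x c, shift_Ioi ht y c]
    have := hmid 0
    linarith
  have hsplit : (∫ u, |heatGamma t (x + u) - heatGamma t (y + u)|)
      = (∫ u in Set.Iic c, |heatGamma t (x + u) - heatGamma t (y + u)|)
        + ∫ u in Set.Ioi c, |heatGamma t (x + u) - heatGamma t (y + u)| := by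
    rw [← integral_add_compl measurableSet_Iic habs, Set.compl_Iic]
  rw [hsplit]
  have h2α := rpow_half_bound ht
  have hxy' : 0 ≤ x - y := by linarith
  nlinarith [hIic, hIoi]

lemma lemA {t : ℝ} (ht : 0 < t) (x y : ℝ) :
    ∫ u, |heatGamma t (x + u) - heatGamma t (y + u)| ≤ |x - y| * t ^ (-(1:ℝ)/2) := by
  rcases le_total y x with h | h
  · rw [abs_of_nonneg (by linarith : (0:ℝ) ≤ x - y)]
    exact lemA' ht h
  · rw [abs_of_nonpos (by linarith : x - y ≤ 0)]
    have := lemA' ht h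
    simp_rw [abs_sub_comm (heatGamma t (x + _))] at this ⊢
    calc (∫ u, |heatGamma t (y + u) - heatGamma t (x + u)|) ≤ (y - x) * t ^ (-(1:ℝ)/2) := this
      _ = -(x - y) * t ^ (-(1:ℝ)/2) := by ring

lemma lemC_sub {t : ℝ} (ht : 0 < t) (x y k : ℝ) :
    ∫ z in Set.Icc (0:ℝ) 1, |heatGamma t (x - z + k) - heatGamma t (y - z + k)|
      ≤ |x - y| * t ^ (-(1:ℝ)/2) := by
  set F : ℝ → ℝ := fun u => |heatGamma t (x + u) - heatGamma t (y + u)| with hF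
  have hFint : Integrable F :=
    ((integrable_heatGamma_shift ht x).sub (integrable_heatGamma_shift ht y)).abs
  have hmp : MeasurePreserving (fun z : ℝ => k + -z) volume volume :=
    (measurePreserving_add_left volume k).comp (Measure.measurePreserving_neg volume)
  have hemb : MeasurableEmbedding (fun z : ℝ => k + -z) := by
    exact (MeasurableEquiv.measurableEmbedding (MeasurableEquiv.addLeft k)).comp
      (MeasurableEquiv.measurableEmbedding (MeasurableEquiv.neg ℝ))
  have hcomp : Integrable (fun z : ℝ => F (k + -z)) :=
    (hmp.integrable_comp_emb hemb).2 hFint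
  have heq : (fun z : ℝ => |heatGamma t (x - z + k) - heatGamma t (y - z + k)|)
      = fun z : ℝ => F (k + -z) := by
    funext z
    rw [hF]
    rw [show x - z + k = x + (k + -z) by ring, show y - z + k = y + (k + -z) by ring]
  rw [heq]
  calc (∫ z in Set.Icc (0:ℝ) 1, F (k + -z))
      ≤ ∫ z, F (k + -z) := setIntegral_le_integral hcomp
        (Filter.Eventually.of_forall (fun z => abs_nonneg _))
    _ = ∫ u, F u := hmp.integral_comp hemb F
    _ ≤ |x - y| * t ^ (-(1:ℝ)/2) := lemA ht x y

lemma lemC_add {t : ℝ} (ht : 0 < t) (x y k : ℝ) :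
    ∫ z in Set.Icc (0:ℝ) 1, |heatGamma t (x + z + k) - heatGamma t (y + z + k)|
      ≤ |x - y| * t ^ (-(1:ℝ)/2) := by
  set F : ℝ → ℝ := fun u => |heatGamma t (x + u) - heatGamma t (y + u)| with hF
  have hFint : Integrable F :=
    ((integrable_heatGamma_shift ht x).sub (integrable_heatGamma_shift ht y)).abs
  have hmp : MeasurePreserving (fun z : ℝ => k + z) volume volume :=
    measurePreserving_add_left volume k
  have hemb : MeasurableEmbedding (fun z : ℝ => k + z) :=
    MeasurableEquiv.measurableEmbedding (MeasurableEquiv.addLeft k)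
  have hcomp : Integrable (fun z : ℝ => F (k + z)) :=
    (hmp.integrable_comp_emb hemb).2 hFint
  have heq : (fun z : ℝ => |heatGamma t (x + z + k) - heatGamma t (y + z + k)|)
      = fun z : ℝ => F (k + z) := by
    funext z
    rw [hF]
    rw [show x + z + k = x + (k + z) by ring, show y + z + k = y + (k + z) by ring]
  rw [heq]
  calc (∫ z in Set.Icc (0:ℝ) 1, F (k + z))
      ≤ ∫ z, F (k + z) := setIntegral_le_integral hcomp
        (Filter.Eventually.of_forall (fun z => abs_nonneg _))
    _ = ∫ u, F u := hmp.integral_comp hemb F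
    _ ≤ |x - y| * t ^ (-(1:ℝ)/2) := lemA ht x y

lemma exp_decay_le {m : ℕ} {a b : ℝ} (h : (m:ℝ) - b ≤ a) :
    Real.exp (-a/4) ≤ Real.exp (b/4) * Real.exp (-1/4) ^ m := by
  rw [← Real.exp_nat_mul, ← Real.exp_add]
  apply Real.exp_le_exp.2
  have : (m:ℝ) * (-1/4) = -(m:ℝ)/4 := by ring
  linarith [this]

noncomputable def cPer (n : ℤ) : ℝ :=
  4 * ((n.natAbs:ℝ) + 1) * Real.exp (-((n.natAbs:ℝ) - 1)^2/4)

noncomputable def cNeu (n : ℤ) : ℝ :=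
  8 * (2*(n.natAbs:ℝ) + 2) * Real.exp (-(2*(n.natAbs:ℝ) - 2)^2/4)

lemma cPer_nonneg (n : ℤ) : 0 ≤ cPer n := by unfold cPer; positivity

lemma cNeu_nonneg (n : ℤ) : 0 ≤ cNeu n := by unfold cNeu; positivity

lemma summable_cPer : Summable cPer := by
  apply summable_of_int_decay (C := 4 * Real.exp (3/4)) (r := Real.exp (-1/4))
    (Real.exp_nonneg _) (Real.exp_lt_one_iff.2 (by norm_num))
  intro n
  rw [abs_of_nonneg (cPer_nonneg n)]
  unfold cPer
  have h := exp_decay_le (m := n.natAbs) (a := ((n.natAbs:ℝ) - 1)^2) (b := 3) (by nlinarith)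
  have h2 : (0:ℝ) ≤ 4 * ((n.natAbs:ℝ) + 1) := by positivity
  nlinarith [mul_le_mul_of_nonneg_left h h2]

lemma summable_cNeu : Summable cNeu := by
  apply summable_of_int_decay (C := 16 * Real.exp (2/4)) (r := Real.exp (-1/4))
    (Real.exp_nonneg _) (Real.exp_lt_one_iff.2 (by norm_num))
  intro n
  rw [abs_of_nonneg (cNeu_nonneg n)]
  unfold cNeu
  have h := exp_decay_le (m := n.natAbs) (a := (2*(n.natAbs:ℝ) - 2)^2) (b := 2) (by nlinarith)
  have h2 : (0:ℝ) ≤ 8 * (2*(n.natAbs:ℝ) + 2) := by positivity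
  nlinarith [mul_le_mul_of_nonneg_left h h2]

lemma per_tail {t : ℝ} (ht : 0 < t) (ht1 : t ≤ 1) {x y z : ℝ}
    (hx : x ∈ Set.Icc (0:ℝ) 1) (hy : y ∈ Set.Icc (0:ℝ) 1) (hz : z ∈ Set.Icc (0:ℝ) 1)
    {n : ℤ} (hn : 2 ≤ n.natAbs) :
    |heatGamma t (x - z + n) - heatGamma t (y - z + n)|
      ≤ |x - y| * (t ^ (-(1:ℝ)/2) * cPer n) := by
  obtain ⟨hx0, hx1⟩ := hx
  obtain ⟨hy0, hy1⟩ := hy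
  obtain ⟨hz0, hz1⟩ := hz
  have hN2 : (2:ℝ) ≤ (n.natAbs:ℝ) := by exact_mod_cast hn
  have habs : ∀ s ∈ Set.uIcc (x - z + (n:ℝ)) (y - z + (n:ℝ)),
      (n.natAbs:ℝ) - 1 ≤ |s| ∧ |s| ≤ (n.natAbs:ℝ) + 1 := by
    intro s hs
    have hb : (n:ℝ) - 1 ≤ s ∧ s ≤ (n:ℝ) + 1 := by
      rcases Set.mem_uIcc.1 hs with ⟨h1, h2⟩ | ⟨h1, h2⟩ <;> constructor <;> linarith
    obtain ⟨hb1, hb2⟩ := hb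
    rcases le_or_gt 0 n with hn0 | hn0
    · have hNn : ((n.natAbs:ℝ)) = (n:ℝ) := by
        rw [Nat.cast_natAbs]; exact_mod_cast abs_of_nonneg hn0
      rw [abs_of_nonneg (by linarith : (0:ℝ) ≤ s)]
      constructor <;> linarith
    · have hNn : ((n.natAbs:ℝ)) = -(n:ℝ) := by
        rw [Nat.cast_natAbs]; exact_mod_cast abs_of_nonpos hn0.le
      rw [abs_of_nonpos (by linarith : s ≤ 0)]
      constructor <;> linarith
  have hT := tail_bound ht ht1 (m := (n.natAbs:ℝ) - 1) (M := (n.natAbs:ℝ) + 1)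
    (by linarith) habs
  have huv : (x - z + (n:ℝ)) - (y - z + (n:ℝ)) = x - y := by ring
  rw [huv] at hT
  calc |heatGamma t (x - z + (n:ℝ)) - heatGamma t (y - z + (n:ℝ))|
      ≤ |x - y| * (t ^ (-(1:ℝ)/2) * (4 * ((n.natAbs:ℝ) + 1)
          * Real.exp (-((n.natAbs:ℝ) - 1)^2/4))) := hT
    _ = |x - y| * (t ^ (-(1:ℝ)/2) * cPer n) := by unfold cPer; ring

lemma neu_tail {t : ℝ} (ht : 0 < t) (ht1 : t ≤ 1) {x y z : ℝ}
    (hx : x ∈ Set.Icc (0:ℝ) 1) (hy : y ∈ Set.Icc (0:ℝ) 1) (hz : z ∈ Set.Icc (0:ℝ) 1)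
    {n : ℤ} (hn : 2 ≤ n.natAbs) :
    |heatGamma t (x - z + 2*n) - heatGamma t (y - z + 2*n)|
      + |heatGamma t (x + z + 2*n) - heatGamma t (y + z + 2*n)|
      ≤ |x - y| * (t ^ (-(1:ℝ)/2) * cNeu n) := by
  obtain ⟨hx0, hx1⟩ := hx
  obtain ⟨hy0, hy1⟩ := hy
  obtain ⟨hz0, hz1⟩ := hz
  have hN2 : (2:ℝ) ≤ (n.natAbs:ℝ) := by exact_mod_cast hn
  have hcast : ((n.natAbs:ℝ)) = (n:ℝ) ∨ ((n.natAbs:ℝ)) = -(n:ℝ) := by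
    rcases le_or_gt 0 n with hn0 | hn0
    · exact Or.inl (by rw [Nat.cast_natAbs]; exact_mod_cast abs_of_nonneg hn0)
    · exact Or.inr (by rw [Nat.cast_natAbs]; exact_mod_cast abs_of_nonpos hn0.le)
  have habs1 : ∀ s ∈ Set.uIcc (x - z + 2*(n:ℝ)) (y - z + 2*(n:ℝ)),
      2*(n.natAbs:ℝ) - 2 ≤ |s| ∧ |s| ≤ 2*(n.natAbs:ℝ) + 2 := by
    intro s hs
    have hb : 2*(n:ℝ) - 1 ≤ s ∧ s ≤ 2*(n:ℝ) + 1 := by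
      rcases Set.mem_uIcc.1 hs with ⟨h1, h2⟩ | ⟨h1, h2⟩ <;> constructor <;> linarith
    obtain ⟨hb1, hb2⟩ := hb
    rcases hcast with hNn | hNn
    · rw [abs_of_nonneg (by linarith : (0:ℝ) ≤ s)]
      constructor <;> linarith
    · rw [abs_of_nonpos (by linarith : s ≤ 0)]
      constructor <;> linarith
  have habs2 : ∀ s ∈ Set.uIcc (x + z + 2*(n:ℝ)) (y + z + 2*(n:ℝ)),
      2*(n.natAbs:ℝ) - 2 ≤ |s| ∧ |s| ≤ 2*(n.natAbs:ℝ) + 2 := by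
    intro s hs
    have hb : 2*(n:ℝ) ≤ s ∧ s ≤ 2*(n:ℝ) + 2 := by
      rcases Set.mem_uIcc.1 hs with ⟨h1, h2⟩ | ⟨h1, h2⟩ <;> constructor <;> linarith
    obtain ⟨hb1, hb2⟩ := hb
    rcases hcast with hNn | hNn
    · rw [abs_of_nonneg (by linarith : (0:ℝ) ≤ s)]
      constructor <;> linarith
    · rw [abs_of_nonpos (by linarith : s ≤ 0)]
      constructor <;> linarith
  have hT1 := tail_bound ht ht1 (m := 2*(n.natAbs:ℝ) - 2) (M := 2*(n.natAbs:ℝ) + 2)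
    (by linarith) habs1
  have hT2 := tail_bound ht ht1 (m := 2*(n.natAbs:ℝ) - 2) (M := 2*(n.natAbs:ℝ) + 2)
    (by linarith) habs2
  have huv1 : (x - z + 2*(n:ℝ)) - (y - z + 2*(n:ℝ)) = x - y := by ring
  have huv2 : (x + z + 2*(n:ℝ)) - (y + z + 2*(n:ℝ)) = x - y := by ring
  rw [huv1] at hT1
  rw [huv2] at hT2
  have : cNeu n = 2 * (4 * (2*(n.natAbs:ℝ) + 2) * Real.exp (-(2*(n.natAbs:ℝ) - 2)^2/4)) := by
    unfold cNeu; ring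
  rw [this]
  have e : |x - y| * (t ^ (-(1:ℝ)/2) * (2 * (4 * (2*(n.natAbs:ℝ) + 2)
      * Real.exp (-(2*(n.natAbs:ℝ) - 2)^2/4))))
      = 2 * (|x - y| * (t ^ (-(1:ℝ)/2) * (4 * (2*(n.natAbs:ℝ) + 2)
      * Real.exp (-(2*(n.natAbs:ℝ) - 2)^2/4)))) := by ring
  rw [e]
  linarith [hT1, hT2]


lemma continuous_heatGamma_comp {t : ℝ} {f : ℝ → ℝ} (hf : Continuous f) :
    Continuous fun z => heatGamma t (f z) := by
  unfold heatGamma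
  exact continuous_const.mul (((hf.pow 2).neg.div_const _).rexp)

lemma cont_sub (t x c : ℝ) : Continuous fun z : ℝ => heatGamma t (x - z + c) :=
  continuous_heatGamma_comp ((continuous_const.sub continuous_id).add continuous_const)

lemma cont_add (t x c : ℝ) : Continuous fun z : ℝ => heatGamma t (x + z + c) :=
  continuous_heatGamma_comp ((continuous_const.add continuous_id).add continuous_const)

lemma per_main {t : ℝ} (ht : 0 < t) (ht1 : t ≤ 1) {x y : ℝ}
    (hx : x ∈ Set.Icc (0:ℝ) 1) (hy : y ∈ Set.Icc (0:ℝ) 1) :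
    (∫ z in Set.Icc (0:ℝ) 1, |pPer t x z - pPer t y z|)
      ≤ (3 + ∑' n : ℤ, cPer n) * |x - y| * t ^ (-(1:ℝ)/2) := by
  classical
  set S : Finset ℤ := {-1, 0, 1} with hS
  set K : ℝ := ∑' n : ℤ, cPer n with hK
  have hpt : ∀ z ∈ Set.Icc (0:ℝ) 1, |pPer t x z - pPer t y z|
      ≤ (∑ n ∈ S, |heatGamma t (x - z + (n:ℝ)) - heatGamma t (y - z + (n:ℝ))|)
        + |x - y| * t ^ (-(1:ℝ)/2) * K := by
    intro z hz
    have hsx : Summable fun n : ℤ => heatGamma t (x - z + (n:ℝ)) := by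
      simpa using summable_heatGamma ht (x - z) 1 le_rfl
    have hsy : Summable fun n : ℤ => heatGamma t (y - z + (n:ℝ)) := by
      simpa using summable_heatGamma ht (y - z) 1 le_rfl
    have hsd : Summable fun n : ℤ =>
        heatGamma t (x - z + (n:ℝ)) - heatGamma t (y - z + (n:ℝ)) := hsx.sub hsy
    have hsabs : Summable fun n : ℤ =>
        |heatGamma t (x - z + (n:ℝ)) - heatGamma t (y - z + (n:ℝ))| := hsd.abs
    have hdiff : pPer t x z - pPer t y z
        = ∑' n : ℤ, (heatGamma t (x - z + (n:ℝ)) - heatGamma t (y - z + (n:ℝ))) := by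
      unfold pPer
      exact (Summable.tsum_sub hsx hsy).symm
    have h1 : |pPer t x z - pPer t y z|
        ≤ ∑' n : ℤ, |heatGamma t (x - z + (n:ℝ)) - heatGamma t (y - z + (n:ℝ))| := by
      rw [hdiff]
      have hn : Summable fun n : ℤ =>
          ‖heatGamma t (x - z + (n:ℝ)) - heatGamma t (y - z + (n:ℝ))‖ := by
        simpa only [Real.norm_eq_abs] using hsabs
      simpa only [Real.norm_eq_abs] using norm_tsum_le_tsum_norm hn
    have hsplit := Summable.sum_add_tsum_compl (s := S) hsabs
    have htail : (∑' i : ↑((S : Set ℤ)ᶜ),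
        |heatGamma t (x - z + ((i:ℤ):ℝ)) - heatGamma t (y - z + ((i:ℤ):ℝ))|)
        ≤ |x - y| * t ^ (-(1:ℝ)/2) * K := by
      have hterm : ∀ i : ↑((S : Set ℤ)ᶜ),
          |heatGamma t (x - z + ((i:ℤ):ℝ)) - heatGamma t (y - z + ((i:ℤ):ℝ))|
          ≤ (|x - y| * t ^ (-(1:ℝ)/2)) * cPer (i:ℤ) := by
        intro i
        have hmem := i.2
        simp only [hS, Set.mem_compl_iff, Finset.coe_insert, Set.mem_insert_iff,
          Finset.coe_singleton, Set.mem_singleton_iff, not_or] at hmem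
        have hn : 2 ≤ (i:ℤ).natAbs := by omega
        calc |heatGamma t (x - z + ((i:ℤ):ℝ)) - heatGamma t (y - z + ((i:ℤ):ℝ))|
            ≤ |x - y| * (t ^ (-(1:ℝ)/2) * cPer (i:ℤ)) := per_tail ht ht1 hx hy hz hn
          _ = (|x - y| * t ^ (-(1:ℝ)/2)) * cPer (i:ℤ) := by ring
      calc (∑' i : ↑((S : Set ℤ)ᶜ),
          |heatGamma t (x - z + ((i:ℤ):ℝ)) - heatGamma t (y - z + ((i:ℤ):ℝ))|)
          ≤ ∑' i : ↑((S : Set ℤ)ᶜ), (|x - y| * t ^ (-(1:ℝ)/2)) * cPer (i:ℤ) :=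
            Summable.tsum_le_tsum hterm (hsabs.subtype _)
              ((summable_cPer.mul_left _).subtype _)
        _ = (|x - y| * t ^ (-(1:ℝ)/2)) * ∑' i : ↑((S : Set ℤ)ᶜ), cPer (i:ℤ) := tsum_mul_left
        _ ≤ (|x - y| * t ^ (-(1:ℝ)/2)) * K := by
            apply mul_le_mul_of_nonneg_left _ (by positivity)
            exact Summable.tsum_subtype_le cPer _ cPer_nonneg summable_cPer
        _ = |x - y| * t ^ (-(1:ℝ)/2) * K := by ring
    linarith [h1, hsplit.symm.le, htail]
  -- integrability of the majorant
  have hcont : ∀ n : ℤ, Continuous fun z : ℝ =>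
      |heatGamma t (x - z + (n:ℝ)) - heatGamma t (y - z + (n:ℝ))| := by
    intro n
    exact ((cont_sub t x (n:ℝ)).sub (cont_sub t y (n:ℝ))).abs
  have hsum_int : IntegrableOn (fun z => ∑ n ∈ S,
      |heatGamma t (x - z + (n:ℝ)) - heatGamma t (y - z + (n:ℝ))|) (Set.Icc (0:ℝ) 1) :=
    (continuous_finset_sum S fun n _ => hcont n).integrableOn_Icc
  have hconst_int : IntegrableOn (fun _ : ℝ => |x - y| * t ^ (-(1:ℝ)/2) * K)
      (Set.Icc (0:ℝ) 1) :=
    integrableOn_const (by rw [Real.volume_Icc]; exact ENNReal.ofReal_ne_top)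
  have hmono := integral_mono_of_nonneg (μ := volume.restrict (Set.Icc (0:ℝ) 1))
    (Filter.Eventually.of_forall fun z => abs_nonneg _)
    (hsum_int.add hconst_int)
    ((ae_restrict_iff' measurableSet_Icc).2 (Filter.Eventually.of_forall hpt))
  have e1 : (∫ z in Set.Icc (0:ℝ) 1, ((∑ n ∈ S,
        |heatGamma t (x - z + (n:ℝ)) - heatGamma t (y - z + (n:ℝ))|)
        + |x - y| * t ^ (-(1:ℝ)/2) * K))
      = (∑ n ∈ S, ∫ z in Set.Icc (0:ℝ) 1,
          |heatGamma t (x - z + (n:ℝ)) - heatGamma t (y - z + (n:ℝ))|)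
        + |x - y| * t ^ (-(1:ℝ)/2) * K := by
    rw [integral_add hsum_int hconst_int,
      integral_finset_sum S (fun n _ => (hcont n).integrableOn_Icc), setIntegral_const]
    simp [Real.volume_Icc]
  have e2 : (∑ n ∈ S, ∫ z in Set.Icc (0:ℝ) 1,
        |heatGamma t (x - z + (n:ℝ)) - heatGamma t (y - z + (n:ℝ))|)
      ≤ 3 * (|x - y| * t ^ (-(1:ℝ)/2)) := by
    have hle := Finset.sum_le_sum (f := fun n : ℤ => ∫ z in Set.Icc (0:ℝ) 1,
        |heatGamma t (x - z + (n:ℝ)) - heatGamma t (y - z + (n:ℝ))|)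
      (g := fun _ : ℤ => |x - y| * t ^ (-(1:ℝ)/2))
      (s := S) (fun n _ => lemC_sub ht x y (n:ℝ))
    rw [Finset.sum_const] at hle
    have : S.card = 3 := rfl
    rw [this] at hle
    simpa [nsmul_eq_mul] using hle
  calc (∫ z in Set.Icc (0:ℝ) 1, |pPer t x z - pPer t y z|)
      ≤ _ := hmono
    _ = _ := e1
    _ ≤ 3 * (|x - y| * t ^ (-(1:ℝ)/2)) + |x - y| * t ^ (-(1:ℝ)/2) * K := by linarith [e2]
    _ = (3 + K) * |x - y| * t ^ (-(1:ℝ)/2) := by ring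


lemma neu_main {t : ℝ} (ht : 0 < t) (ht1 : t ≤ 1) {x y : ℝ}
    (hx : x ∈ Set.Icc (0:ℝ) 1) (hy : y ∈ Set.Icc (0:ℝ) 1) :
    (∫ z in Set.Icc (0:ℝ) 1, |pNeu t x z - pNeu t y z|)
      ≤ (6 + ∑' n : ℤ, cNeu n) * |x - y| * t ^ (-(1:ℝ)/2) := by
  classical
  set S : Finset ℤ := {-1, 0, 1} with hS
  set K : ℝ := ∑' n : ℤ, cNeu n with hK
  set E : ℤ → ℝ → ℝ := fun n z =>
    |heatGamma t (x - z + 2*(n:ℝ)) - heatGamma t (y - z + 2*(n:ℝ))|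
    + |heatGamma t (x + z + 2*(n:ℝ)) - heatGamma t (y + z + 2*(n:ℝ))| with hE
  have hsumE : ∀ z : ℝ, Summable fun n : ℤ => E n z := by
    intro z
    apply Summable.add
    · exact ((summable_heatGamma ht (x - z) 2 one_le_two).sub
        (summable_heatGamma ht (y - z) 2 one_le_two)).abs
    · exact ((summable_heatGamma ht (x + z) 2 one_le_two).sub
        (summable_heatGamma ht (y + z) 2 one_le_two)).abs
  have hpt : ∀ z ∈ Set.Icc (0:ℝ) 1, |pNeu t x z - pNeu t y z|
      ≤ (∑ n ∈ S, E n z) + |x - y| * t ^ (-(1:ℝ)/2) * K := by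
    intro z hz
    have hsx1 : Summable fun n : ℤ => heatGamma t (x - z + 2*(n:ℝ)) :=
      summable_heatGamma ht (x - z) 2 one_le_two
    have hsx2 : Summable fun n : ℤ => heatGamma t (x + z + 2*(n:ℝ)) :=
      summable_heatGamma ht (x + z) 2 one_le_two
    have hsy1 : Summable fun n : ℤ => heatGamma t (y - z + 2*(n:ℝ)) :=
      summable_heatGamma ht (y - z) 2 one_le_two
    have hsy2 : Summable fun n : ℤ => heatGamma t (y + z + 2*(n:ℝ)) :=
      summable_heatGamma ht (y + z) 2 one_le_two
    have hsx := hsx1.add hsx2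
    have hsy := hsy1.add hsy2
    have hsd := hsx.sub hsy
    have hdiff : pNeu t x z - pNeu t y z
        = ∑' n : ℤ, ((heatGamma t (x - z + 2*(n:ℝ)) + heatGamma t (x + z + 2*(n:ℝ)))
          - (heatGamma t (y - z + 2*(n:ℝ)) + heatGamma t (y + z + 2*(n:ℝ)))) := by
      unfold pNeu
      exact (Summable.tsum_sub hsx hsy).symm
    have h1 : |pNeu t x z - pNeu t y z|
        ≤ ∑' n : ℤ, |(heatGamma t (x - z + 2*(n:ℝ)) + heatGamma t (x + z + 2*(n:ℝ)))
          - (heatGamma t (y - z + 2*(n:ℝ)) + heatGamma t (y + z + 2*(n:ℝ)))| := by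
      rw [hdiff]
      have hn : Summable fun n : ℤ =>
          ‖(heatGamma t (x - z + 2*(n:ℝ)) + heatGamma t (x + z + 2*(n:ℝ)))
          - (heatGamma t (y - z + 2*(n:ℝ)) + heatGamma t (y + z + 2*(n:ℝ)))‖ := by
        simpa only [Real.norm_eq_abs] using hsd.abs
      simpa only [Real.norm_eq_abs] using norm_tsum_le_tsum_norm hn
    have h2 : (∑' n : ℤ, |(heatGamma t (x - z + 2*(n:ℝ)) + heatGamma t (x + z + 2*(n:ℝ)))
          - (heatGamma t (y - z + 2*(n:ℝ)) + heatGamma t (y + z + 2*(n:ℝ)))|)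
        ≤ ∑' n : ℤ, E n z := by
      apply Summable.tsum_le_tsum _ hsd.abs (hsumE z)
      intro n
      rw [hE]
      have : (heatGamma t (x - z + 2*(n:ℝ)) + heatGamma t (x + z + 2*(n:ℝ)))
          - (heatGamma t (y - z + 2*(n:ℝ)) + heatGamma t (y + z + 2*(n:ℝ)))
          = (heatGamma t (x - z + 2*(n:ℝ)) - heatGamma t (y - z + 2*(n:ℝ)))
            + (heatGamma t (x + z + 2*(n:ℝ)) - heatGamma t (y + z + 2*(n:ℝ))) := by ring
      rw [this]
      exact abs_add_le _ _
    have hsplit := Summable.sum_add_tsum_compl (s := S) (hsumE z)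
    have htail : (∑' i : ↑((S : Set ℤ)ᶜ), E (i:ℤ) z)
        ≤ |x - y| * t ^ (-(1:ℝ)/2) * K := by
      have hterm : ∀ i : ↑((S : Set ℤ)ᶜ),
          E (i:ℤ) z ≤ (|x - y| * t ^ (-(1:ℝ)/2)) * cNeu (i:ℤ) := by
        intro i
        have hmem := i.2
        simp only [hS, Set.mem_compl_iff, Finset.coe_insert, Set.mem_insert_iff,
          Finset.coe_singleton, Set.mem_singleton_iff, not_or] at hmem
        have hn : 2 ≤ (i:ℤ).natAbs := by omega
        calc E (i:ℤ) z ≤ |x - y| * (t ^ (-(1:ℝ)/2) * cNeu (i:ℤ)) :=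
              neu_tail ht ht1 hx hy hz hn
          _ = (|x - y| * t ^ (-(1:ℝ)/2)) * cNeu (i:ℤ) := by ring
      calc (∑' i : ↑((S : Set ℤ)ᶜ), E (i:ℤ) z)
          ≤ ∑' i : ↑((S : Set ℤ)ᶜ), (|x - y| * t ^ (-(1:ℝ)/2)) * cNeu (i:ℤ) :=
            Summable.tsum_le_tsum hterm ((hsumE z).subtype _)
              ((summable_cNeu.mul_left _).subtype _)
        _ = (|x - y| * t ^ (-(1:ℝ)/2)) * ∑' i : ↑((S : Set ℤ)ᶜ), cNeu (i:ℤ) := tsum_mul_left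
        _ ≤ (|x - y| * t ^ (-(1:ℝ)/2)) * K := by
            apply mul_le_mul_of_nonneg_left _ (by positivity)
            exact Summable.tsum_subtype_le cNeu _ cNeu_nonneg summable_cNeu
        _ = |x - y| * t ^ (-(1:ℝ)/2) * K := by ring
    linarith [h1, h2, hsplit.symm.le, htail]
  -- integrability
  have hcont : ∀ n : ℤ, Continuous (E n) := by
    intro n
    exact (((cont_sub t x (2*(n:ℝ))).sub (cont_sub t y (2*(n:ℝ)))).abs).add
      (((cont_add t x (2*(n:ℝ))).sub (cont_add t y (2*(n:ℝ)))).abs)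
  have hsum_int : IntegrableOn (fun z => ∑ n ∈ S, E n z) (Set.Icc (0:ℝ) 1) :=
    (continuous_finset_sum S fun n _ => hcont n).integrableOn_Icc
  have hconst_int : IntegrableOn (fun _ : ℝ => |x - y| * t ^ (-(1:ℝ)/2) * K)
      (Set.Icc (0:ℝ) 1) :=
    integrableOn_const (by rw [Real.volume_Icc]; exact ENNReal.ofReal_ne_top)
  have hmono := integral_mono_of_nonneg (μ := volume.restrict (Set.Icc (0:ℝ) 1))
    (Filter.Eventually.of_forall fun z => abs_nonneg _)
    (hsum_int.add hconst_int)
    ((ae_restrict_iff' measurableSet_Icc).2 (Filter.Eventually.of_forall hpt))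
  have e1 : (∫ z in Set.Icc (0:ℝ) 1, ((∑ n ∈ S, E n z) + |x - y| * t ^ (-(1:ℝ)/2) * K))
      = (∑ n ∈ S, ∫ z in Set.Icc (0:ℝ) 1, E n z) + |x - y| * t ^ (-(1:ℝ)/2) * K := by
    rw [integral_add hsum_int hconst_int,
      integral_finset_sum S (fun n _ => (hcont n).integrableOn_Icc), setIntegral_const]
    simp [Real.volume_Icc]
  have e2 : (∑ n ∈ S, ∫ z in Set.Icc (0:ℝ) 1, E n z)
      ≤ 6 * (|x - y| * t ^ (-(1:ℝ)/2)) := by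
    have hone : ∀ n : ℤ, (∫ z in Set.Icc (0:ℝ) 1, E n z)
        ≤ 2 * (|x - y| * t ^ (-(1:ℝ)/2)) := by
      intro n
      have hsplitE : (∫ z in Set.Icc (0:ℝ) 1, E n z)
          = (∫ z in Set.Icc (0:ℝ) 1,
              |heatGamma t (x - z + 2*(n:ℝ)) - heatGamma t (y - z + 2*(n:ℝ))|)
            + ∫ z in Set.Icc (0:ℝ) 1,
              |heatGamma t (x + z + 2*(n:ℝ)) - heatGamma t (y + z + 2*(n:ℝ))| := by
        rw [hE]
        exact integral_add
          ((((cont_sub t x (2*(n:ℝ))).sub (cont_sub t y (2*(n:ℝ)))).abs).integrableOn_Icc)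
          ((((cont_add t x (2*(n:ℝ))).sub (cont_add t y (2*(n:ℝ)))).abs).integrableOn_Icc)
      rw [hsplitE]
      have b1 := lemC_sub ht x y (2*(n:ℝ))
      have b2 := lemC_add ht x y (2*(n:ℝ))
      linarith
    have hle := Finset.sum_le_sum (f := fun n : ℤ => ∫ z in Set.Icc (0:ℝ) 1, E n z)
      (g := fun _ : ℤ => 2 * (|x - y| * t ^ (-(1:ℝ)/2)))
      (s := S) (fun n _ => hone n)
    rw [Finset.sum_const] at hle
    have : S.card = 3 := rfl
    rw [this] at hle
    calc (∑ n ∈ S, ∫ z in Set.Icc (0:ℝ) 1, E n z)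
        ≤ (3:ℕ) • (2 * (|x - y| * t ^ (-(1:ℝ)/2))) := hle
      _ = 6 * (|x - y| * t ^ (-(1:ℝ)/2)) := by
          rw [nsmul_eq_mul]; push_cast; ring
  calc (∫ z in Set.Icc (0:ℝ) 1, |pNeu t x z - pNeu t y z|)
      ≤ _ := hmono
    _ = _ := e1
    _ ≤ 6 * (|x - y| * t ^ (-(1:ℝ)/2)) + |x - y| * t ^ (-(1:ℝ)/2) * K := by linarith [e2]
    _ = (6 + K) * |x - y| * t ^ (-(1:ℝ)/2) := by ring

end HeatKernelAux

/-- **Spatial `L¹` modulus of continuity of the heat kernels.** -/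
theorem heat_kernel_L1_modulus_of_continuity
    (p : ℝ → ℝ → ℝ → ℝ) (hp : p = pPer ∨ p = pNeu) :
    ∃ C : ℝ, 0 < C ∧ ∀ t : ℝ, 0 < t → t ≤ 1 →
      ∀ x ∈ Set.Icc (0:ℝ) 1, ∀ y ∈ Set.Icc (0:ℝ) 1,
        ∫ z in Set.Icc (0:ℝ) 1, |p t x z - p t y z|
          ≤ C * |x - y| * t ^ (-(1:ℝ)/2) := by
  rcases hp with rfl | rfl
  · refine ⟨3 + ∑' n : ℤ, cPer n, ?_, ?_⟩
    · have : 0 ≤ ∑' n : ℤ, cPer n := tsum_nonneg cPer_nonneg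
      linarith
    · intro t ht ht1 x hx y hy
      exact per_main ht ht1 hx hy
  · refine ⟨6 + ∑' n : ℤ, cNeu n, ?_, ?_⟩
    · have : 0 ≤ ∑' n : ℤ, cNeu n := tsum_nonneg cNeu_nonneg
      linarith
    · intro t ht ht1 x hx y hy
      exact neu_main ht ht1 hx hy
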